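/- arXiv:math/9808143 — 2 statements merged into one kernel-verified Lean document; each statement's English description precedes it below -/
import Mathlib

section
/- For Re(s) > 1, the integral ∫₀^∞ β₁(2v) e^v v^{s-1} dv equals (1/2)Γ(s)[ψ((s+1)/2) − ψ(s/2)], where β₁(t) = ∫₁^∞ u^{-1} e^{-ut} du and ψ = Γ'/Γ is the digamma function. -/
open MeasureTheory Real Set

/-- The exponential integral `β₁(t) = ∫₁^∞ u⁻¹ e^{-ut} du`. -/
noncomputable def beta1 (t : ℝ) : ℝ := ∫ u in Set.Ioi (1 : ℝ), Real.exp (-u * t) / u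

/-- The digamma function `ψ = Γ'/Γ`. -/
noncomputable def digamma (x : ℝ) : ℝ := deriv Real.Gamma x / Real.Gamma x





lemma aux_ne_neg {y : ℝ} (hy : 0 < y) (m : ℕ) : y ≠ -(m:ℝ) := by
  have h : (0:ℝ) ≤ (m:ℝ) := Nat.cast_nonneg m
  intro h'; rw [h'] at hy; linarith

lemma digamma_eq {x : ℝ} (hx : 0 < x) :
    digamma x = deriv (Real.log ∘ Real.Gamma) x := by
  rw [Function.comp_def, deriv.log (Real.differentiableAt_Gamma (aux_ne_neg hx))
    (Real.Gamma_pos_of_pos hx).ne']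
  rfl

lemma digamma_rec {x : ℝ} (hx : 0 < x) : digamma (x + 1) = digamma x + 1 / x := by
  have hder : ∀ {y : ℝ}, 0 < y → DifferentiableAt ℝ (Real.log ∘ Real.Gamma) y := by
    intro y hy
    exact ((Real.differentiableAt_Gamma (aux_ne_neg hy)).log (Real.Gamma_ne_zero (aux_ne_neg hy)))
  rw [digamma_eq (by linarith), digamma_eq hx]
  rw [← deriv_comp_add_const, one_div, ← Real.deriv_log,
    ← deriv_add (hder hx) (Real.differentiableAt_log hx.ne')]
  apply Filter.EventuallyEq.deriv_eq
  filter_upwards [eventually_gt_nhds hx] with y hy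
  simp only [Function.comp_apply, Real.Gamma_add_one hy.ne',
    Real.log_mul hy.ne' (Real.Gamma_pos_of_pos hy).ne', add_comm, Pi.add_apply]

lemma digamma_mono {a b : ℝ} (ha : 0 < a) (hab : a ≤ b) : digamma a ≤ digamma b := by
  have hb : 0 < b := lt_of_lt_of_le ha hab
  rw [digamma_eq ha, digamma_eq hb]
  have hc : ConvexOn ℝ (Ioi 0) (Real.log ∘ Real.Gamma) := Real.convexOn_log_Gamma
  refine hc.monotoneOn_deriv (fun y hy ↦ ?_) ha hb hab
  have hy : (0:ℝ) < y := hy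
  exact ((Real.differentiableAt_Gamma (aux_ne_neg hy)).log (Real.Gamma_ne_zero (aux_ne_neg hy)))

noncomputable def auxI (s : ℝ) : ℝ := ∫ x in Set.Ioo (0:ℝ) 1, x ^ (s-1) / (1+x)

lemma rpow_integrableOn {s : ℝ} (hs : 0 < s) :
    IntegrableOn (fun x : ℝ => x ^ (s-1)) (Ioo (0:ℝ) 1) := by
  have := (intervalIntegral.intervalIntegrable_rpow' (a := (0:ℝ)) (b := 1)
    (r := s - 1) (by linarith)).1
  exact this.mono_set Ioo_subset_Ioc_self

lemma auxI_integrableOn {s : ℝ} (hs : 0 < s) :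
    IntegrableOn (fun x : ℝ => x ^ (s-1) / (1+x)) (Ioo (0:ℝ) 1) := by
  refine (rpow_integrableOn hs).mono' ?_ ?_
  · apply Measurable.aestronglyMeasurable
    fun_prop
  · filter_upwards [ae_restrict_mem measurableSet_Ioo] with x hx
    have hx0 : 0 < x := hx.1
    have h1 : (1:ℝ) ≤ 1 + x := by linarith
    rw [norm_of_nonneg (by positivity)]
    calc x ^ (s-1) / (1+x) ≤ x ^ (s-1) / 1 := by
          apply div_le_div_of_nonneg_left (by positivity) one_pos h1
      _ = x ^ (s-1) := div_one _

lemma integral_rpow_Ioo {s : ℝ} (hs : 0 < s) :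
    ∫ x in Ioo (0:ℝ) 1, x ^ (s-1) = 1 / s := by
  rw [← integral_Ioc_eq_integral_Ioo, ← intervalIntegral.integral_of_le (by norm_num : (0:ℝ) ≤ 1)]
  rw [integral_rpow (Or.inl (by linarith))]
  rw [Real.one_rpow, Real.zero_rpow (by linarith : s - 1 + 1 ≠ 0)]
  ring_nf

lemma auxI_nonneg {s : ℝ} : 0 ≤ auxI s := by
  apply setIntegral_nonneg measurableSet_Ioo
  intro x hx
  have : 0 < x := hx.1
  positivity

lemma auxI_le {s : ℝ} (hs : 0 < s) : auxI s ≤ 1 / s := by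
  rw [← integral_rpow_Ioo hs]
  refine setIntegral_mono_on (auxI_integrableOn hs) (rpow_integrableOn hs) measurableSet_Ioo ?_
  intro x hx
  have hx0 : 0 < x := hx.1
  have h1 : (1:ℝ) ≤ 1 + x := by linarith
  calc x ^ (s-1) / (1+x) ≤ x ^ (s-1) / 1 :=
        div_le_div_of_nonneg_left (by positivity) one_pos h1
    _ = x ^ (s-1) := div_one _

lemma auxI_rec {s : ℝ} (hs : 0 < s) : auxI s + auxI (s+1) = 1 / s := by
  rw [← integral_rpow_Ioo hs]
  unfold auxI
  rw [← integral_add (auxI_integrableOn hs) (auxI_integrableOn (by linarith))]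
  refine setIntegral_congr_fun measurableSet_Ioo (fun x hx => ?_)
  have hx0 : 0 < x := hx.1
  have hne : (1:ℝ) + x ≠ 0 := by positivity
  have : x ^ (s+1-1) = x ^ (s-1) * x := by
    rw [← Real.rpow_add_one hx0.ne' (s-1)]; ring_nf
  have h2 : x^(s-1) + x^(s-1)*x = x^(s-1)*(1+x) := by ring
  rw [this, ← add_div, h2, mul_div_assoc, div_self hne, mul_one]
lemma key_digamma {s : ℝ} (hs : 0 < s) :
    digamma ((s+1)/2) - digamma (s/2) = 2 * auxI s := by
  set d : ℝ → ℝ := fun t => (digamma ((t+1)/2) - digamma (t/2)) - 2 * auxI t with hd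
  suffices h : ∀ t, 0 < t → d t = 0 by
    have := h s hs; simp only [hd] at this; linarith
  intro t ht
  have hstep : ∀ u : ℝ, 0 < u → d (u+1) = - d u := by
    intro u hu
    have h1 : digamma (u/2 + 1) = digamma (u/2) + 2/u := by
      rw [digamma_rec (by positivity), one_div_div]
    have h2 : 2*auxI u + 2*auxI (u+1) = 2/u := by
      have := auxI_rec hu
      have e : 2/u = 2*(1/u) := by ring
      rw [e]; linarith
    simp only [hd]
    have e1 : (u+1+1)/2 = u/2 + 1 := by ring
    rw [e1, h1]
    linarith
  have hbound : ∀ u : ℝ, 0 < u → |d u| ≤ 2/u := by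
    intro u hu
    have m1 : digamma (u/2) ≤ digamma ((u+1)/2) :=
      digamma_mono (by positivity) (by linarith)
    have m2 : digamma ((u+1)/2) ≤ digamma (u/2) + 2/u := by
      have hr := digamma_rec (x := u/2) (by positivity)
      have h3 : digamma ((u+1)/2) ≤ digamma (u/2 + 1) :=
        digamma_mono (by positivity) (by linarith)
      rw [hr, one_div_div] at h3
      exact h3
    have a1 : (0:ℝ) ≤ auxI u := auxI_nonneg
    have a2 : auxI u ≤ 1/u := auxI_le hu
    have e2 : (2:ℝ)/u = 2*(1/u) := by ring
    rw [abs_le, e2]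
    rw [e2] at m2
    simp only [hd]
    constructor <;> linarith
  have heq : ∀ n : ℕ, |d (t + n)| = |d t| := by
    intro n; induction n with
    | zero => simp
    | succ n ih =>
      have e : t + ((n:ℕ)+1 : ℕ) = (t + n) + 1 := by push_cast; ring
      rw [e, hstep _ (by positivity), abs_neg, ih]
  have hlim : Filter.Tendsto (fun n : ℕ => 2/(t + n)) Filter.atTop (nhds 0) := by
    exact Filter.Tendsto.div_atTop tendsto_const_nhds
      (Filter.tendsto_atTop_add_const_left _ _ tendsto_natCast_atTop_atTop)
  have hle : |d t| ≤ 0 := by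
    refine ge_of_tendsto' hlim (fun n => ?_)
    rw [← heq n]
    exact hbound (t + n) (by positivity)
  have := abs_nonneg (d t)
  exact abs_eq_zero.mp (le_antisymm hle this)
lemma subst_lemma {s : ℝ} :
    auxI s = ∫ u in Ioi (1:ℝ), (2*u-1) ^ (-s) / u := by
  have himg : (fun u : ℝ => (2*u-1)⁻¹) '' (Ioi 1) = Ioo (0:ℝ) 1 := by
    ext x
    constructor
    · rintro ⟨u, hu, rfl⟩
      have hu1 : (1:ℝ) < u := hu
      have hw : (1:ℝ) < 2*u-1 := by linarith
      exact ⟨by positivity, inv_lt_one_of_one_lt₀ hw⟩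
    · rintro ⟨hx0, hx1⟩
      refine ⟨(x⁻¹+1)/2, ?_, ?_⟩
      · have : (1:ℝ) < x⁻¹ := (one_lt_inv₀ hx0).mpr hx1
        simp only [mem_Ioi]; linarith
      · show (2*((x⁻¹+1)/2)-1)⁻¹ = x
        have : 2*((x⁻¹+1)/2)-1 = x⁻¹ := by ring
        rw [this, inv_inv]
  have hder : ∀ u ∈ Ioi (1:ℝ),
      HasDerivWithinAt (fun u : ℝ => (2*u-1)⁻¹) (-2/(2*u-1)^2) (Ioi 1) u := by
    intro u hu
    have hu1 : (1:ℝ) < u := hu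
    have hne : 2*u-1 ≠ 0 := by intro h; rw [sub_eq_zero] at h; linarith [h]
    have h1 : HasDerivAt (fun u : ℝ => 2*u-1) 2 u := by
      simpa using ((hasDerivAt_id u).const_mul (2:ℝ)).sub_const 1
    exact (h1.inv hne).hasDerivWithinAt
  have hinj : InjOn (fun u : ℝ => (2*u-1)⁻¹) (Ioi 1) := by
    intro a ha b hb h
    simp only [inv_inj] at h
    linarith [h]
  have := integral_image_eq_integral_abs_deriv_smul measurableSet_Ioi hder hinj
    (fun x => x ^ (s-1) / (1+x))
  rw [himg] at this
  rw [auxI, this]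
  refine setIntegral_congr_fun measurableSet_Ioi (fun u hu => ?_)
  have hu1 : (1:ℝ) < u := hu
  have hw : (1:ℝ) < 2*u-1 := by linarith
  have hw0 : (0:ℝ) < 2*u-1 := by linarith
  have hu0 : (0:ℝ) < u := by linarith
  simp only [smul_eq_mul]
  rw [abs_div, abs_neg, abs_two, abs_of_nonneg (by positivity : (0:ℝ) ≤ (2*u-1)^2)]
  rw [Real.inv_rpow hw0.le, ← Real.rpow_neg hw0.le]
  have e : -(s-1) = -s + 1 := by ring
  rw [e, Real.rpow_add hw0, Real.rpow_one]
  have h1x : 1 + (2*u-1)⁻¹ = 2*u/(2*u-1) := by field_simp; ring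
  rw [h1x]
  field_simp
-- the integrand as a function on u × v
noncomputable def F (s : ℝ) (p : ℝ × ℝ) : ℝ :=
  Real.exp (-((2*p.1-1)*p.2)) * p.2 ^ (s-1) / p.1

lemma F_meas (s : ℝ) : Measurable (F s) := by
  unfold F
  fun_prop

-- slice integrability in v for fixed u > 1
lemma slice_integrable {s u : ℝ} (hs : 1 < s) (hu : 1 < u) :
    IntegrableOn (fun v => Real.exp (-((2*u-1)*v)) * v ^ (s-1) / u) (Ioi (0:ℝ)) := by
  have hb : (0:ℝ) < 2*u-1 := by linarith
  have h := integrableOn_rpow_mul_exp_neg_mul_rpow (p := 1) (s := s-1) (b := 2*u-1)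
    (by linarith) one_pos hb
  have h2 : IntegrableOn (fun v : ℝ => v ^ (s-1) * Real.exp (-((2*u-1) * v))) (Ioi 0) := by
    refine h.congr_fun (fun v hv => ?_) measurableSet_Ioi
    simp only [Real.rpow_one, neg_mul]
  have h3 : IntegrableOn (fun v : ℝ => v ^ (s-1) * Real.exp (-((2*u-1) * v)) / u)
      (Ioi (0:ℝ)) := h2.div_const u
  refine h3.congr_fun (fun v hv => ?_) measurableSet_Ioi
  show v ^ (s-1) * Real.exp (-((2*u-1) * v)) / u = Real.exp (-((2*u-1)*v)) * v ^ (s-1) / u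
  rw [mul_comm]

-- value of the inner integral
lemma slice_integral {s u : ℝ} (hs : 1 < s) (hu : 1 < u) :
    ∫ v in Ioi (0:ℝ), Real.exp (-((2*u-1)*v)) * v ^ (s-1) / u
      = Real.Gamma s * ((2*u-1) ^ (-s) / u) := by
  have hb : (0:ℝ) < 2*u-1 := by linarith
  rw [integral_div]
  have : ∀ v : ℝ, Real.exp (-((2*u-1)*v)) * v ^ (s-1) = v ^ (s-1) * Real.exp (-((2*u-1)*v)) :=
    fun v => mul_comm _ _
  simp_rw [this]
  rw [Real.integral_rpow_mul_exp_neg_mul_Ioi (by linarith : (0:ℝ) < s) hb]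
  rw [one_div, Real.inv_rpow hb.le, ← Real.rpow_neg hb.le]
  ring

lemma outer_integrable {s : ℝ} (hs : 1 < s) :
    IntegrableOn (fun u : ℝ => (2*u-1) ^ (-s) / u) (Ioi (1:ℝ)) := by
  have hmain : IntegrableOn (fun u : ℝ => u ^ (-s)) (Ioi (1:ℝ)) :=
    integrableOn_Ioi_rpow_of_lt (by linarith) one_pos
  refine hmain.mono' ?_ ?_
  · apply Measurable.aestronglyMeasurable; fun_prop
  · filter_upwards [ae_restrict_mem measurableSet_Ioi] with u hu
    have hu1 : (1:ℝ) < u := hu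
    have hu0 : (0:ℝ) < u := by linarith
    have hw : (0:ℝ) < 2*u-1 := by linarith
    rw [norm_of_nonneg (by positivity)]
    calc (2*u-1) ^ (-s) / u ≤ (2*u-1) ^ (-s) / 1 :=
          div_le_div_of_nonneg_left (by positivity) one_pos hu1.le
      _ = (2*u-1) ^ (-s) := div_one _
      _ ≤ u ^ (-s) := Real.rpow_le_rpow_of_nonpos hu0 (by linarith) (by linarith)

lemma F_integrable {s : ℝ} (hs : 1 < s) :
    Integrable (F s) ((volume.restrict (Ioi (1:ℝ))).prod (volume.restrict (Ioi (0:ℝ)))) := by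
  rw [integrable_prod_iff ((F_meas s).aestronglyMeasurable)]
  constructor
  · filter_upwards [ae_restrict_mem measurableSet_Ioi] with u hu
    exact slice_integrable hs hu
  · have heq : ∀ᵐ u ∂(volume.restrict (Ioi (1:ℝ))),
        (∫ v in Ioi (0:ℝ), ‖F s (u, v)‖) = Real.Gamma s * ((2*u-1) ^ (-s) / u) := by
      filter_upwards [ae_restrict_mem measurableSet_Ioi] with u hu
      have hu1 : (1:ℝ) < u := hu
      rw [← slice_integral hs hu1]
      refine setIntegral_congr_fun measurableSet_Ioi (fun v hv => ?_)
      have hv0 : (0:ℝ) < v := hv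
      have hu0 : (0:ℝ) < u := by linarith
      exact norm_of_nonneg (by unfold F; positivity)
    exact Integrable.congr ((outer_integrable hs).const_mul _)
      (Filter.EventuallyEq.symm heq)

lemma lhs_eq {s : ℝ} (hs : 1 < s) :
    (∫ v in Ioi (0:ℝ), beta1 (2 * v) * Real.exp v * v ^ (s - 1))
      = Real.Gamma s * ∫ u in Ioi (1:ℝ), (2*u-1) ^ (-s) / u := by
  have step1 : (∫ v in Ioi (0:ℝ), beta1 (2 * v) * Real.exp v * v ^ (s - 1))
      = ∫ v in Ioi (0:ℝ), ∫ u in Ioi (1:ℝ), F s (u, v) := by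
    refine setIntegral_congr_fun measurableSet_Ioi (fun v hv => ?_)
    have hv0 : (0:ℝ) < v := hv
    rw [mul_assoc, beta1, ← integral_mul_const]
    refine setIntegral_congr_fun measurableSet_Ioi (fun u hu => ?_)
    unfold F
    rw [show -((2*u-1)*v) = -u*(2*v)+v by ring, Real.exp_add]
    ring
  have step2 : (∫ v in Ioi (0:ℝ), ∫ u in Ioi (1:ℝ), F s (u, v))
      = ∫ u in Ioi (1:ℝ), ∫ v in Ioi (0:ℝ), F s (u, v) := by
    exact (integral_integral_swap (f := fun u v => F s (u, v)) (F_integrable hs)).symm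
  have step3 : (∫ u in Ioi (1:ℝ), ∫ v in Ioi (0:ℝ), F s (u, v))
      = ∫ u in Ioi (1:ℝ), Real.Gamma s * ((2*u-1) ^ (-s) / u) := by
    refine setIntegral_congr_fun measurableSet_Ioi (fun u hu => ?_)
    exact slice_integral hs hu
  rw [step1, step2, step3, MeasureTheory.integral_const_mul]

theorem stmt0 (s : ℝ) (hs : 1 < s) :
    (∫ v in Set.Ioi (0 : ℝ), beta1 (2 * v) * Real.exp v * v ^ (s - 1))
      = (1 / 2) * Real.Gamma s * (digamma ((s + 1) / 2) - digamma (s / 2)) := by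
  rw [lhs_eq hs, ← subst_lemma, key_digamma (by linarith : (0:ℝ) < s)]
  ring
end

section
/- Let k be an imaginary quadratic field, p₀ a split prime of ℚ in k with p₀O_k = ℘₀℘̄₀. In the quaternion setup B = k ⊕ ky with y² = −κ, the lattices R' = O_k ⊕ ℘₀^{−1}y and R'' = O_k ⊕ ℘̄₀^{−1}y are orders of B containing R = O_k ⊕ O_k y, and no single order of B contains both R' and R''; indeed Q(p₀^{−1}y) = κ/p₀² ∉ ℤ. -/
open NumberField

/-- `I⁻¹ = {b ∈ k : b·I ⊆ 𝓞ₖ}` for an integral ideal `I`, as a subset of `k`. -/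
def idealInvSet (k : Type*) [Field k] [NumberField k] (I : Ideal (𝓞 k)) : Set k :=
  {b : k | ∀ c ∈ I, ∃ d : 𝓞 k, b * algebraMap (𝓞 k) k c = algebraMap (𝓞 k) k d}

/-- The lattice `𝓞ₖ ⊕ S·y` inside `B = k ⊕ k·y`. -/
def latticeSet {k : Type*} [Field k] [NumberField k] {B : Type*} [Ring B] [Algebra ℚ B]
    (f : k →ₐ[ℚ] B) (y : B) (S : Set k) : Set B :=
  {x : B | ∃ (a : 𝓞 k) (b : k), b ∈ S ∧ x = f (algebraMap (𝓞 k) k a) + f b * y}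

section Aux
open Polynomial

variable {k : Type*} [Field k] [NumberField k] {B : Type*} [Ring B] [Algebra ℚ B]

omit [NumberField k] in
lemma aux_int_iff [NumberField k] {x : k} :
    IsIntegral ℤ x ↔ ∃ d : 𝓞 k, x = algebraMap (𝓞 k) k d := by
  constructor
  · intro hx
    exact ⟨⟨x, hx⟩, rfl⟩
  · rintro ⟨d, rfl⟩
    exact NumberField.RingOfIntegers.isIntegral_coe d

lemma aux_sigma_int (σ : k ≃ₐ[ℚ] k) {x : k} (hx : IsIntegral ℤ x) : IsIntegral ℤ (σ x) :=
  hx.map (σ.toAlgHom.toRingHom.toIntAlgHom)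

lemma aux_fixed_rational (h2 : Module.finrank ℚ k = 2) (σ : k ≃ₐ[ℚ] k)
    (hne : ∃ c₀ : k, σ c₀ ≠ c₀) {c : k} (hc : σ c = c) : ∃ q : ℚ, c = algebraMap ℚ k q := by
  by_contra hcq
  push_neg at hcq
  obtain ⟨c₀, hc₀⟩ := hne
  have h0 : c ≠ 0 := fun h => hcq 0 (by simp [h])
  have hli : LinearIndependent ℚ ![(1:k), c] := by
    rw [linearIndependent_fin2]
    refine ⟨by simpa using h0, fun a ha => ?_⟩
    simp only [Matrix.cons_val_one, Matrix.head_cons, Matrix.cons_val_zero] at ha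
    have hane : a ≠ 0 := by
      rintro rfl; simp at ha
    have : c = a⁻¹ • (1:k) := by rw [← ha, smul_smul, inv_mul_cancel₀ hane, one_smul]
    exact hcq a⁻¹ (by rw [this, Algebra.smul_def, mul_one])
  have hcard : Fintype.card (Fin 2) = Module.finrank ℚ k := by simp [h2]
  let bb := basisOfLinearIndependentOfCardEqFinrank hli hcard
  have hbb : ⇑bb = ![(1:k), c] := coe_basisOfLinearIndependentOfCardEqFinrank hli hcard
  have hσid : σ.toLinearMap = LinearMap.id := by
    apply bb.ext
    intro i
    fin_cases i <;> simp [hbb, hc]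
  exact hc₀ (by have := congrArg (fun g => g c₀) hσid; simpa using this)

lemma aux_mul_formula (f : k →ₐ[ℚ] B) (σ : k ≃ₐ[ℚ] k) (κ : ℤ) (y : B)
    (hyy : y * y = algebraMap ℚ B (-(κ : ℚ)))
    (hcomm : ∀ a : k, y * f a = f (σ a) * y) (a c b d : k) :
    (f a + f b * y) * (f c + f d * y)
      = f (a * c - (κ : k) * (b * σ d)) + f (a * d + b * σ c) * y := by
  have h1 : f b * y * f c = f (b * σ c) * y := by
    rw [mul_assoc, hcomm c, ← mul_assoc, ← map_mul]
  have h2 : f b * y * (f d * y) = - f ((κ:k) * (b * σ d)) := by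
    rw [mul_assoc, ← mul_assoc y (f d) y, hcomm d, ← mul_assoc, ← mul_assoc, ← map_mul,
      mul_assoc, hyy, ← AlgHom.commutes f (-(κ:ℚ)), ← map_mul, ← map_neg]
    congr 1
    rw [map_neg, map_intCast]
    ring
  have h3 : f a * (f d * y) = f (a * d) * y := by rw [← mul_assoc, ← map_mul]
  rw [add_mul, mul_add, mul_add, ← map_mul f a c, h1, h2, h3, map_sub, map_add, add_mul]
  abel

lemma aux_build_order (f : k →ₐ[ℚ] B) (σ : k ≃ₐ[ℚ] k) (hσ : ∀ x : k, σ (σ x) = x)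
    (κ : ℤ) (y : B)
    (hyy : y * y = algebraMap ℚ B (-(κ : ℚ)))
    (hcomm : ∀ a : k, y * f a = f (σ a) * y)
    (hrat : ∀ c : k, σ c = c → IsIntegral ℤ c → ∃ n : ℤ, c = algebraMap ℚ k (n : ℚ))
    (S : Set k)
    (h0 : (0:k) ∈ S)
    (hadd : ∀ b ∈ S, ∀ c ∈ S, b + c ∈ S)
    (hneg : ∀ b ∈ S, -b ∈ S)
    (hmulO : ∀ b ∈ S, ∀ e : 𝓞 k, b * algebraMap (𝓞 k) k e ∈ S)
    (hκS : ∀ b ∈ S, ∀ d ∈ S, ∃ e : 𝓞 k, (κ:k) * (b * σ d) = algebraMap (𝓞 k) k e) :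
    ∃ O' : Subring B, (O' : Set B) = latticeSet f y S ∧ ∀ x ∈ O', IsIntegral ℤ x := by
  set A := algebraMap (𝓞 k) k with hA
  have hσO : ∀ e : 𝓞 k, ∃ e' : 𝓞 k, σ (A e) = A e' :=
    fun e => aux_int_iff.mp (aux_sigma_int σ (RingOfIntegers.isIntegral_coe e))
  refine ⟨{ carrier := latticeSet f y S
            one_mem' := ⟨1, 0, h0, by simp⟩
            zero_mem' := ⟨0, 0, h0, by simp⟩
            add_mem' := ?_
            neg_mem' := ?_
            mul_mem' := ?_ }, rfl, ?_⟩
  · rintro x1 x2 ⟨a, b, hb, rfl⟩ ⟨a2, b2, hb2, rfl⟩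
    obtain ⟨e, he⟩ := hκS b hb b2 hb2
    obtain ⟨e2, he2⟩ := hσO a2
    refine ⟨a * a2 - e, A a * b2 + b * σ (A a2), ?_, ?_⟩
    · refine hadd _ (by rw [mul_comm]; exact hmulO b2 hb2 a) _ ?_
      rw [he2]; exact hmulO b hb e2
    · rw [aux_mul_formula f σ κ y hyy hcomm]
      congr 2
      rw [map_sub, map_mul, ← he]
  · rintro x1 x2 ⟨a, b, hb, rfl⟩ ⟨a2, b2, hb2, rfl⟩
    refine ⟨a + a2, b + b2, hadd _ hb _ hb2, ?_⟩
    rw [map_add, map_add, map_add, add_mul]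
    abel
  · rintro x ⟨a, b, hb, rfl⟩
    refine ⟨-a, -b, hneg _ hb, ?_⟩
    rw [map_neg, map_neg, map_neg, neg_mul, neg_add]
  · rintro x ⟨a, b, hb, rfl⟩
    obtain ⟨e, he⟩ := hκS b hb b hb
    have hint_a := RingOfIntegers.isIntegral_coe a
    have ht : ∃ tz : ℤ, A a + σ (A a) = algebraMap ℚ k (tz : ℚ) := by
      refine hrat _ ?_ (hint_a.add (aux_sigma_int σ hint_a))
      rw [map_add, hσ, add_comm]
    have hn : ∃ nz : ℤ, A a * σ (A a) + (κ:k) * (b * σ b) =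
        algebraMap ℚ k (nz : ℚ) := by
      refine hrat _ ?_ ?_
      · rw [map_add, map_mul, map_mul, map_mul, hσ, map_intCast, hσ]
        ring
      · refine (hint_a.mul (aux_sigma_int σ hint_a)).add ?_
        rw [he]
        exact RingOfIntegers.isIntegral_coe e
    obtain ⟨tz, ht⟩ := ht
    obtain ⟨nz, hn⟩ := hn
    have gen : ∀ u v w s : k, f u * (f v + f w * y) - f s
        = f (u * v - s) + f (u * w) * y := by
      intro u v w s
      rw [mul_add, ← map_mul, ← mul_assoc, ← map_mul, map_sub]
      abel
    have key : (f (A a) + f b * y) * (f (A a) + f b * y)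
        = algebraMap ℚ B (tz : ℚ) * (f (A a) + f b * y) - algebraMap ℚ B (nz : ℚ) := by
      rw [aux_mul_formula f σ κ y hyy hcomm, ← AlgHom.commutes f (tz : ℚ),
        ← AlgHom.commutes f (nz : ℚ), ← ht, ← hn, gen]
      congr 1
      · exact congrArg f (by ring)
      · rw [show (A a + σ (A a)) * b = A a * b + b * σ (A a) from by ring]
    refine ⟨X ^ 2 + (C (-tz) * X + C nz), ?_, ?_⟩
    · apply Polynomial.monic_X_pow_add
      exact lt_of_le_of_lt Polynomial.degree_linear_le (by norm_num)
    · have h1 : (algebraMap ℤ B) (-tz) = -(algebraMap ℚ B (tz : ℚ)) := by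
        rw [eq_intCast, ← map_intCast (algebraMap ℚ B) (-tz),
          show ((-tz : ℤ) : ℚ) = -(tz : ℚ) from by push_cast; ring, map_neg]
      have h2 : (algebraMap ℤ B) nz = algebraMap ℚ B (nz : ℚ) := by
        rw [eq_intCast, ← map_intCast (algebraMap ℚ B) nz]
      show eval₂ (algebraMap ℤ B) _ _ = 0
      rw [eval₂_add, eval₂_add, eval₂_X_pow, eval₂_mul_X, eval₂_C, eval₂_C, h1, h2,
        pow_two, key]
      simp only [← hA, neg_mul]
      abel

end Aux

theorem stmt16 (k : Type*) [Field k] [NumberField k]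
    (h2 : Module.finrank ℚ k = 2)
    (him : ∀ v : NumberField.InfinitePlace k, v.IsComplex)
    (B : Type*) [Ring B] [Algebra ℚ B]
    (f : k →ₐ[ℚ] B) (hf : Function.Injective f)
    (σ : k ≃ₐ[ℚ] k) (hσ : ∀ x : k, σ (σ x) = x)
    (κ : ℤ) (y : B)
    (hyy : y * y = algebraMap ℚ B (-(κ : ℚ)))
    (hcomm : ∀ a : k, y * f a = f (σ a) * y)
    (p₀ : ℕ) (hp₀ : p₀.Prime)
    (hκ1 : (p₀ : ℤ) ∣ κ) (hκ2 : ¬ ((p₀ : ℤ) ^ 2 ∣ κ))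
    (P Q : Ideal (𝓞 k)) (hP : P.IsPrime) (hQ : Q.IsPrime) (hPQ : P ≠ Q)
    (hsplit : Ideal.span {(p₀ : 𝓞 k)} = P * Q)
    (hconj : ∀ c : 𝓞 k, c ∈ P ↔ ∃ d ∈ Q, σ (algebraMap (𝓞 k) k c) = algebraMap (𝓞 k) k d) :
    -- `R' = 𝓞ₖ ⊕ ℘₀⁻¹·y` and `R'' = 𝓞ₖ ⊕ ℘̄₀⁻¹·y` are orders containing `R = 𝓞ₖ ⊕ 𝓞ₖ·y`:
    (∃ O' : Subring B, (O' : Set B) = latticeSet f y (idealInvSet k P) ∧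
        ∀ x ∈ O', IsIntegral ℤ x) ∧
    (∃ O'' : Subring B, (O'' : Set B) = latticeSet f y (idealInvSet k Q) ∧
        ∀ x ∈ O'', IsIntegral ℤ x) ∧
    latticeSet f y {b : k | ∃ d : 𝓞 k, b = algebraMap (𝓞 k) k d}
      ⊆ latticeSet f y (idealInvSet k P) ∧
    latticeSet f y {b : k | ∃ d : 𝓞 k, b = algebraMap (𝓞 k) k d}
      ⊆ latticeSet f y (idealInvSet k Q) ∧
    -- no single order contains both `R'` and `R''`:
    (¬ ∃ O : Subring B, (∀ x ∈ O, IsIntegral ℤ x) ∧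
        latticeSet f y (idealInvSet k P) ⊆ (O : Set B) ∧
        latticeSet f y (idealInvSet k Q) ⊆ (O : Set B)) ∧
    -- indeed `Q(p₀⁻¹ y) = κ/p₀² ∉ ℤ`:
    (((p₀ : ℚ)⁻¹ • y) * ((p₀ : ℚ)⁻¹ • y) = algebraMap ℚ B (-((κ : ℚ) / (p₀ : ℚ) ^ 2)) ∧
      ¬ ∃ n : ℤ, (κ : ℚ) / (p₀ : ℚ) ^ 2 = (n : ℚ)) := by
  set A := algebraMap (𝓞 k) k with hA
  have hAinj : Function.Injective A := fun x y h => NumberField.RingOfIntegers.ext h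
  -- σ is not the identity
  have hne : ∃ c₀ : k, σ c₀ ≠ c₀ := by
    by_contra h
    push_neg at h
    apply hPQ
    ext c
    rw [hconj c]
    constructor
    · rintro ⟨d, hd, he⟩
      rw [h] at he
      rwa [hAinj he]
    · intro hc
      exact ⟨c, hc, by rw [h]⟩
  -- σ-fixed integral elements are integers
  have hrat : ∀ c : k, σ c = c → IsIntegral ℤ c → ∃ n : ℤ, c = algebraMap ℚ k (n : ℚ) := by
    intro c hc hint
    obtain ⟨q, rfl⟩ := aux_fixed_rational h2 σ hne hc
    rw [isIntegral_algebraMap_iff (algebraMap ℚ k).injective] at hint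
    obtain ⟨n, hn⟩ := IsIntegrallyClosed.isIntegral_iff.mp hint
    exact ⟨n, by rw [← hn]; norm_num⟩
  -- the two directions of conjugation between P and Q
  have hPtoQ : ∀ p ∈ P, ∃ p' ∈ Q, σ (A p) = A p' := fun p hp => (hconj p).mp hp
  have hQtoP : ∀ q ∈ Q, ∃ q' ∈ P, σ (A q) = A q' := by
    intro q hq
    obtain ⟨q', hq'⟩ := aux_int_iff.mp (aux_sigma_int σ (RingOfIntegers.isIntegral_coe q))
    exact ⟨q', (hconj q').mpr ⟨q, hq, by rw [← hq', hσ]⟩, hq'⟩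
  -- σ swaps the inverse ideals
  have hσinv : ∀ I J : Ideal (𝓞 k), (∀ c ∈ I, ∃ c' ∈ J, σ (A c) = A c') →
      ∀ b ∈ idealInvSet k J, σ b ∈ idealInvSet k I := by
    intro I J hIJ b hb c hc
    obtain ⟨c', hc'J, hc'eq⟩ := hIJ c hc
    obtain ⟨e, he⟩ := hb c' hc'J
    obtain ⟨e', he'⟩ := aux_int_iff.mp (aux_sigma_int σ (RingOfIntegers.isIntegral_coe e))
    refine ⟨e', ?_⟩
    have h3 := congrArg σ he
    rw [map_mul, ← hc'eq, hσ] at h3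
    rw [h3, he']
  -- κ times (P⁻¹-elt)·(Q⁻¹-elt) is integral
  have hκmem : ∀ b ∈ idealInvSet k P, ∀ d ∈ idealInvSet k Q,
      ∃ e : 𝓞 k, (κ:k) * (b * d) = A e := by
    intro b hb d hd
    obtain ⟨m, hm⟩ := hκ1
    have hp₀mem : (p₀ : 𝓞 k) ∈ P * Q := hsplit ▸ Ideal.mem_span_singleton_self _
    have key : ∀ z ∈ P * Q, ∃ e : 𝓞 k, b * d * A z = A e := by
      intro z hz
      refine Submodule.mul_induction_on hz ?_ ?_
      · intro p hp q hq
        obtain ⟨e1, he1⟩ := hb p hp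
        obtain ⟨e2, he2⟩ := hd q hq
        exact ⟨e1 * e2, by
          rw [map_mul, map_mul, show b * d * (A p * A q) = (b * A p) * (d * A q) from by ring,
            he1, he2]⟩
      · rintro x1 x2 ⟨e1, he1⟩ ⟨e2, he2⟩
        exact ⟨e1 + e2, by rw [map_add, mul_add, he1, he2, map_add]⟩
    obtain ⟨e, he⟩ := key _ hp₀mem
    refine ⟨(m : 𝓞 k) * e, ?_⟩
    rw [map_mul, map_intCast, ← he, map_natCast]
    rw [show (κ : k) = (p₀ : k) * (m : k) from by push_cast [hm]; ring]
    ring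
  -- hypotheses of aux_build_order for a prime ideal's inverse set
  have hinv0 : ∀ I : Ideal (𝓞 k), (0:k) ∈ idealInvSet k I :=
    fun I c _ => ⟨0, by simp⟩
  have hinvadd : ∀ I : Ideal (𝓞 k), ∀ b ∈ idealInvSet k I, ∀ c ∈ idealInvSet k I,
      b + c ∈ idealInvSet k I := by
    intro I b hb c hc e he
    obtain ⟨d1, hd1⟩ := hb e he
    obtain ⟨d2, hd2⟩ := hc e he
    exact ⟨d1 + d2, by rw [add_mul, hd1, hd2, map_add]⟩
  have hinvneg : ∀ I : Ideal (𝓞 k), ∀ b ∈ idealInvSet k I, -b ∈ idealInvSet k I := by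
    intro I b hb e he
    obtain ⟨d1, hd1⟩ := hb e he
    exact ⟨-d1, by rw [neg_mul, hd1, map_neg]⟩
  have hinvmulO : ∀ I : Ideal (𝓞 k), ∀ b ∈ idealInvSet k I, ∀ e : 𝓞 k,
      b * A e ∈ idealInvSet k I := by
    intro I b hb e c hc
    obtain ⟨d1, hd1⟩ := hb (e * c) (Ideal.mul_mem_left I e hc)
    exact ⟨d1, by rw [mul_assoc, ← map_mul, hd1]⟩
  have horderP : ∃ O' : Subring B, (O' : Set B) = latticeSet f y (idealInvSet k P) ∧
      ∀ x ∈ O', IsIntegral ℤ x := by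
    refine aux_build_order f σ hσ κ y hyy hcomm hrat _ (hinv0 P) (hinvadd P) (hinvneg P)
      (hinvmulO P) ?_
    intro b hb d hd
    exact hκmem b hb (σ d) (hσinv Q P hQtoP d hd)
  have horderQ : ∃ O'' : Subring B, (O'' : Set B) = latticeSet f y (idealInvSet k Q) ∧
      ∀ x ∈ O'', IsIntegral ℤ x := by
    refine aux_build_order f σ hσ κ y hyy hcomm hrat _ (hinv0 Q) (hinvadd Q) (hinvneg Q)
      (hinvmulO Q) ?_
    intro b hb d hd
    obtain ⟨e, he⟩ := hκmem (σ d) (hσinv P Q hPtoQ d hd) b hb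
    exact ⟨e, by rw [← he]; ring⟩
  refine ⟨horderP, horderQ, ?_, ?_, ?_, ?_, ?_⟩
  · rintro x ⟨a, b, ⟨d, rfl⟩, rfl⟩
    exact ⟨a, A d, fun c hc => ⟨d * c, by rw [← map_mul]⟩, rfl⟩
  · rintro x ⟨a, b, ⟨d, rfl⟩, rfl⟩
    exact ⟨a, A d, fun c hc => ⟨d * c, by rw [← map_mul]⟩, rfl⟩
  · -- no common order
    rintro ⟨O, hOint, hOP, hOQ⟩
    have hp0k : ((p₀ : ℕ) : k) ≠ 0 := Nat.cast_ne_zero.mpr hp₀.pos.ne'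
    have hp₀ne : ((p₀ : ℕ) : 𝓞 k) ≠ 0 := fun h => hp0k (by rw [← map_natCast A p₀, h, map_zero])
    have hp₀P : (p₀ : 𝓞 k) ∈ P :=
      Ideal.mul_le_left (I := P) (J := Q)
        (show (p₀ : 𝓞 k) ∈ P * Q from hsplit ▸ Ideal.mem_span_singleton_self _)
    have hPbot : P ≠ ⊥ := fun h => hp₀ne (by rwa [h, Submodule.mem_bot] at hp₀P)
    have hQbot : Q ≠ ⊥ := by
      intro h
      rw [h, Ideal.mul_bot] at hsplit
      exact hp₀ne (by
        have := Ideal.mem_span_singleton_self (p₀ : 𝓞 k)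
        rwa [hsplit, Submodule.mem_bot] at this)
    have hPmax := hP.isMaximal hPbot
    have hQmax := hQ.isMaximal hQbot
    obtain ⟨z, hzQ, hzP⟩ : ∃ z, z ∈ Q ∧ z ∉ P := by
      by_contra h
      push_neg at h
      exact hPQ (hQmax.eq_of_le hP.ne_top h).symm
    obtain ⟨w, hwP, hwQ⟩ : ∃ w, w ∈ P ∧ w ∉ Q := by
      by_contra h
      push_neg at h
      exact hPQ (hPmax.eq_of_le hQ.ne_top h)
    obtain ⟨w', hw'Q, hw'eq⟩ := hPtoQ w hwP
    have hw'P : w' ∉ P := by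
      intro hw'P
      obtain ⟨d2, hd2Q, heq2⟩ := (hconj w').mp hw'P
      rw [← hw'eq, hσ] at heq2
      exact hwQ (by rwa [hAinj heq2])
    set b := A z * ((p₀ : ℕ) : k)⁻¹ with hbdef
    set d := A w * ((p₀ : ℕ) : k)⁻¹ with hddef
    have hbP : b ∈ idealInvSet k P := by
      intro c hc
      have hmem : z * c ∈ Ideal.span {(p₀ : 𝓞 k)} := by
        rw [hsplit, mul_comm P Q]
        exact Ideal.mul_mem_mul hzQ hc
      obtain ⟨g, hg⟩ := Ideal.mem_span_singleton'.mp hmem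
      refine ⟨g, ?_⟩
      have h1 : A z * A c = A g * ((p₀ : ℕ) : k) := by
        rw [← map_mul, ← congrArg A hg, map_mul, map_natCast]
      calc b * A c = (A z * A c) * ((p₀ : ℕ) : k)⁻¹ := by rw [hbdef]; ring
        _ = A g := by rw [h1]; field_simp
    have hdQ : d ∈ idealInvSet k Q := by
      intro c hc
      have hmem : w * c ∈ Ideal.span {(p₀ : 𝓞 k)} := by
        rw [hsplit]
        exact Ideal.mul_mem_mul hwP hc
      obtain ⟨g, hg⟩ := Ideal.mem_span_singleton'.mp hmem
      refine ⟨g, ?_⟩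
      have h1 : A w * A c = A g * ((p₀ : ℕ) : k) := by
        rw [← map_mul, ← congrArg A hg, map_mul, map_natCast]
      calc d * A c = (A w * A c) * ((p₀ : ℕ) : k)⁻¹ := by rw [hddef]; ring
        _ = A g := by rw [h1]; field_simp
    have hbO : f b * y ∈ O := hOP ⟨0, b, hbP, by simp⟩
    have hdO : f d * y ∈ O := hOQ ⟨0, d, hdQ, by simp⟩
    have hprod := hOint _ (mul_mem hbO hdO)
    have hform : (f b * y) * (f d * y) = f (-((κ : k) * (b * σ d))) := by
      have := aux_mul_formula f σ κ y hyy hcomm 0 0 b d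
      simpa using this
    rw [hform] at hprod
    have hg1 : IsIntegral ℤ (-((κ : k) * (b * σ d))) :=
      (isIntegral_algHom_iff (f.toRingHom.toIntAlgHom) hf).mp hprod
    have hg2 : IsIntegral ℤ ((κ : k) * (b * σ d)) := by
      have := hg1.neg
      rwa [neg_neg] at this
    obtain ⟨e, he⟩ := aux_int_iff.mp hg2
    have hσd : σ d = A w' * (((p₀ : ℕ) : k))⁻¹ := by
      rw [hddef, map_mul, hw'eq, map_inv₀, map_natCast]
    obtain ⟨m, hm⟩ := hκ1
    have h2' : (κ : k) * (A z * A w') = A e * ((p₀ : ℕ) : k) ^ 2 := by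
      calc (κ : k) * (A z * A w')
          = ((κ : k) * (b * σ d)) * ((p₀ : ℕ) : k) ^ 2 := by
            rw [hσd, hbdef,
              show (κ : k) * (A z * ((p₀ : ℕ) : k)⁻¹ * (A w' * ((p₀ : ℕ) : k)⁻¹))
                    * ((p₀ : ℕ) : k) ^ 2
                  = (κ : k) * (A z * A w') * ((((p₀ : ℕ) : k))⁻¹ * ((p₀ : ℕ) : k))
                    * ((((p₀ : ℕ) : k))⁻¹ * ((p₀ : ℕ) : k)) from by ring,
              inv_mul_cancel₀ hp0k]
            ring
        _ = A e * ((p₀ : ℕ) : k) ^ 2 := by rw [he]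
    have h3' : (m : k) * (A z * A w') = A e * ((p₀ : ℕ) : k) := by
      apply mul_left_cancel₀ hp0k
      calc ((p₀ : ℕ) : k) * ((m : k) * (A z * A w')) = (κ : k) * (A z * A w') := by
            push_cast [hm]; ring
        _ = A e * ((p₀ : ℕ) : k) ^ 2 := h2'
        _ = ((p₀ : ℕ) : k) * (A e * ((p₀ : ℕ) : k)) := by ring
    have hkey : (m : 𝓞 k) * (z * w') = e * (p₀ : 𝓞 k) := by
      apply hAinj
      rw [map_mul, map_mul, map_mul, map_intCast, map_natCast]
      exact h3'
    have hmemP : (m : 𝓞 k) * (z * w') ∈ P := by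
      rw [hkey]
      exact Ideal.mul_mem_left P e hp₀P
    rcases hP.mem_or_mem hmemP with hmP | hzwP
    · have hpdvd : ¬ ((p₀ : ℤ) ∣ m) := by
        intro hd
        obtain ⟨u, hu⟩ := hd
        exact hκ2 ⟨u, by rw [hm, hu]; ring⟩
      have hcop : IsCoprime ((p₀ : ℤ)) m :=
        (Nat.prime_iff_prime_int.mp hp₀).coprime_iff_not_dvd.mpr hpdvd
      obtain ⟨u, v, huv⟩ := hcop
      have hone : (1 : 𝓞 k) ∈ P := by
        have h4 := congrArg (algebraMap ℤ (𝓞 k)) huv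
        push_cast at h4
        rw [← h4]
        exact add_mem (Ideal.mul_mem_left _ _ hp₀P) (Ideal.mul_mem_left _ _ hmP)
      exact hP.ne_top ((Ideal.eq_top_iff_one _).mpr hone)
    · rcases hP.mem_or_mem hzwP with h | h
      · exact hzP h
      · exact hw'P h
  · -- Q(p₀⁻¹ y) computation
    have hp0 : ((p₀ : ℕ) : ℚ) ≠ 0 := Nat.cast_ne_zero.mpr hp₀.pos.ne'
    rw [smul_mul_smul, hyy, Algebra.smul_def, ← map_mul]
    congr 1
    rw [show -((κ:ℚ) / (p₀:ℚ) ^ 2) = -((κ:ℚ) * (((p₀:ℚ))⁻¹ * ((p₀:ℚ))⁻¹)) from by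
      rw [div_eq_mul_inv, pow_two, mul_inv]]
    ring
  · rintro ⟨n, hn⟩
    apply hκ2
    refine ⟨n, ?_⟩
    have hp0 : ((p₀ : ℕ) : ℚ) ≠ 0 := Nat.cast_ne_zero.mpr hp₀.pos.ne'
    have h5 : (κ : ℚ) = ((p₀ : ℤ) : ℚ) ^ 2 * (n : ℚ) := by
      rw [div_eq_iff (pow_ne_zero 2 hp0)] at hn
      rw [hn]; push_cast; ring
    exact_mod_cast h5
end
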